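/- Suppose q ≥ δ+1 and there exist ℓ distinct lines L₁, …, L_ℓ in PG(2, q), not all passing through a common point, such that each L_i has at most q − δ points lying on some other L_j. Then ℓ ≤ ⌊(q² + q + 1)/(δ+2)⌋. -/

import Mathlib

open Module Finset
open scoped Classical

section Aux

variable {F : Type*} [Field F] [Fintype F]

/-- Number of 1-dimensional subspaces of a finite vector space. -/
lemma aux_rank1_count {V : Type*} [AddCommGroup V] [Module F V] [Fintype V]
    [Fintype (Submodule F V)] :
    (Finset.univ.filter (fun P : Submodule F V => finrank F P = 1)).card
      * (Fintype.card F - 1) = Fintype.card V - 1 := by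
  classical
  set S : Finset V := Finset.univ.filter (fun v => v ≠ 0) with hS
  set R : Finset (Submodule F V) :=
    Finset.univ.filter (fun P : Submodule F V => finrank F P = 1) with hR
  have hmap : ∀ v ∈ S, Submodule.span F {v} ∈ R := by
    intro v hv
    simp only [hS, mem_filter, mem_univ, true_and] at hv
    simp only [hR, mem_filter, mem_univ, true_and]
    exact finrank_span_singleton hv
  have hfib := Finset.card_eq_sum_card_fiberwise hmap
  have hScard : S.card = Fintype.card V - 1 := by
    rw [hS, Finset.filter_ne', Finset.card_erase_of_mem (Finset.mem_univ 0),
      Finset.card_univ]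
  have hfibcard : ∀ P ∈ R, (S.filter (fun v => Submodule.span F {v} = P)).card
      = Fintype.card F - 1 := by
    intro P hP
    simp only [hR, mem_filter, mem_univ, true_and] at hP
    have hset : S.filter (fun v => Submodule.span F {v} = P)
        = (P : Set V).toFinset.erase 0 := by
      ext v
      simp only [hS, Finset.mem_filter, Finset.mem_erase, Set.mem_toFinset,
        SetLike.mem_coe, mem_univ, true_and]
      constructor
      · rintro ⟨hv0, hsp⟩
        exact ⟨hv0, hsp ▸ Submodule.mem_span_singleton_self v⟩
      · rintro ⟨hv0, hvP⟩
        refine ⟨hv0, ?_⟩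
        have hle : Submodule.span F {v} ≤ P := by
          rw [Submodule.span_le]; simpa using hvP
        exact Submodule.eq_of_le_of_finrank_le hle
          (by rw [hP, finrank_span_singleton hv0])
    rw [hset, Finset.card_erase_of_mem (by simp [Submodule.zero_mem]),
      Set.toFinset_card]
    have : Fintype.card P = Fintype.card F ^ finrank F P :=
      card_eq_pow_finrank (K := F)
    rw [show (Fintype.card ((P : Set V) : Type _)) = Fintype.card P from rfl, this, hP,
      pow_one]
  rw [Finset.sum_congr rfl hfibcard, Finset.sum_const, smul_eq_mul] at hfib
  rw [← hScard, hfib]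

/-- Number of 1-dimensional subspaces contained in a given subspace. -/
lemma aux_rank1_count_le {V : Type*} [AddCommGroup V] [Module F V] [Fintype V]
    [Fintype (Submodule F V)] (L : Submodule F V) [Fintype L] [Fintype (Submodule F L)] :
    (Finset.univ.filter (fun P : Submodule F V => finrank F P = 1 ∧ P ≤ L)).card
      * (Fintype.card F - 1) = Fintype.card L - 1 := by
  classical
  rw [← aux_rank1_count (F := F) (V := L)]
  congr 1
  refine Finset.card_nbij' (fun P => Submodule.comap L.subtype P)
    (fun P => Submodule.map L.subtype P) ?_ ?_ ?_ ?_
  · intro P hP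
    simp only [Finset.mem_coe, mem_filter, mem_univ, true_and] at hP ⊢
    have hmc : Submodule.map L.subtype (Submodule.comap L.subtype P) = P :=
      Submodule.map_comap_eq_self (by rw [Submodule.range_subtype]; exact hP.2)
    have h2 := Submodule.finrank_map_subtype_eq L (Submodule.comap L.subtype P)
    rw [hmc] at h2
    rw [← h2]; exact hP.1
  · intro P hP
    simp only [Finset.mem_coe, mem_filter, mem_univ, true_and] at hP ⊢
    constructor
    · rw [Submodule.finrank_map_subtype_eq]; exact hP
    · exact Submodule.map_subtype_le L P
  · intro P hP
    simp only [Finset.mem_coe, mem_filter, mem_univ, true_and] at hP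
    exact Submodule.map_comap_eq_self (by rw [Submodule.range_subtype]; exact hP.2)
  · intro P hP
    simp only [Finset.mem_coe, mem_filter, mem_univ, true_and] at hP
    exact Submodule.comap_map_eq_of_injective (Submodule.injective_subtype L) P

end Aux

/-- If `q ≥ δ+1` and there exist `ℓ` distinct lines in `PG(2,q)`, not all passing through a
common point, such that each line has at most `q − δ` points lying on some other line of
the family, then `ℓ ≤ ⌊(q² + q + 1)/(δ+2)⌋`. -/
theorem stmt_11 {F : Type*} [Field F] [Fintype F] (q δ ℓ : ℕ)
    (hq : Fintype.card F = q) (hqδ : δ + 1 ≤ q)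
    (L : Fin ℓ → Submodule F (Fin 3 → F)) (hL2 : ∀ i, Module.finrank F (L i) = 2)
    (hinj : Function.Injective L)
    (hnotsun : ¬ ∃ P : Submodule F (Fin 3 → F),
      Module.finrank F P = 1 ∧ ∀ i, P ≤ L i)
    (hint : ∀ i : Fin ℓ,
      {P : Submodule F (Fin 3 → F) | Module.finrank F P = 1 ∧ P ≤ L i ∧
        ∃ j, j ≠ i ∧ P ≤ L j}.ncard ≤ q - δ) :
    ℓ ≤ (q ^ 2 + q + 1) / (δ + 2) := by
  classical
  set M := Fin 3 → F with hM
  haveI : Finite (Submodule F M) :=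
    Finite.of_injective (fun P => (P : Set M)) SetLike.coe_injective
  haveI : Fintype (Submodule F M) := Fintype.ofFinite _
  have hq2 : 2 ≤ q := by
    rw [← hq]; exact Fintype.one_lt_card
  have hrk3 : finrank F M = 3 := Module.finrank_fin_fun F
  -- intersection of two distinct lines is a point
  have hinter : ∀ i j : Fin ℓ, i ≠ j → finrank F ↥(L i ⊓ L j) = 1 := by
    intro i j hij
    have hsum := Submodule.finrank_sup_add_finrank_inf_eq (L i) (L j)
    rw [hL2 i, hL2 j] at hsum
    have hsup : finrank F ↥(L i ⊔ L j) ≤ 3 := by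
      have := Submodule.finrank_le (L i ⊔ L j)
      rwa [hrk3] at this
    have hinfle : finrank F ↥(L i ⊓ L j) ≤ 2 := by
      have := Submodule.finrank_mono (inf_le_left : L i ⊓ L j ≤ L i)
      rwa [hL2 i] at this
    have hne2 : finrank F ↥(L i ⊓ L j) ≠ 2 := by
      intro h2
      have h1 : L i ⊓ L j = L i :=
        Submodule.eq_of_le_of_finrank_le inf_le_left (by rw [hL2 i, h2])
      have h2' : L i ⊓ L j = L j :=
        Submodule.eq_of_le_of_finrank_le inf_le_right (by rw [hL2 j, h2])
      exact hij (hinj (h1 ▸ h2'))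
    omega
  -- degree bound: every point lies on at most q - δ lines
  have hdeg : ∀ P : Submodule F M, finrank F P = 1 →
      (Finset.univ.filter (fun i : Fin ℓ => P ≤ L i)).card ≤ q - δ := by
    intro P hP1
    push_neg at hnotsun
    obtain ⟨j, hj⟩ := hnotsun P hP1
    -- map i ↦ L i ⊓ L j into the shared points of L j
    have hcard := hint j
    have hset : {Q : Submodule F M | finrank F Q = 1 ∧ Q ≤ L j ∧
        ∃ k, k ≠ j ∧ Q ≤ L k}.ncard
        = (Finset.univ.filter (fun Q : Submodule F M => finrank F Q = 1 ∧ Q ≤ L j ∧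
          ∃ k, k ≠ j ∧ Q ≤ L k)).card := by
      rw [Set.ncard_eq_toFinset_card', Set.toFinset_setOf]
    rw [hset] at hcard
    refine le_trans ?_ hcard
    apply Finset.card_le_card_of_injOn (fun i => L i ⊓ L j)
    · intro i hi
      simp only [Finset.mem_coe, mem_filter, mem_univ, true_and] at hi ⊢
      have hij : i ≠ j := fun h => hj (h ▸ hi)
      exact ⟨hinter i j hij, inf_le_right, i, hij, inf_le_left⟩
    · intro i1 hi1 i2 hi2 heq
      simp only [Finset.coe_filter, Set.mem_setOf_eq, mem_univ, true_and] at hi1 hi2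
      set Q := L i1 ⊓ L j with hQ
      have hi1j : i1 ≠ j := fun h => hj (h ▸ hi1)
      have hQ1 : finrank F ↥Q = 1 := hinter i1 j hi1j
      have hQP : Q ≠ P := by
        intro h
        exact hj (h ▸ (inf_le_right : Q ≤ L j))
      -- P ⊔ Q has rank ≥ 2 and is contained in both lines
      have hPQ2 : 2 ≤ finrank F ↥(P ⊔ Q) := by
        have hsum := Submodule.finrank_sup_add_finrank_inf_eq P Q
        rw [hP1, hQ1] at hsum
        have hinfle : finrank F ↥(P ⊓ Q) ≤ 1 := by
          have := Submodule.finrank_mono (inf_le_left : P ⊓ Q ≤ P)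
          rwa [hP1] at this
        have hne1 : finrank F ↥(P ⊓ Q) ≠ 1 := by
          intro h1
          have hp : P ⊓ Q = P :=
            Submodule.eq_of_le_of_finrank_le inf_le_left (by rw [hP1, h1])
          have hq' : P ⊓ Q = Q :=
            Submodule.eq_of_le_of_finrank_le inf_le_right (by rw [hQ1, h1])
          exact hQP (hq'.symm.trans hp)
        omega
      have hle1 : P ⊔ Q ≤ L i1 := sup_le hi1 inf_le_left
      have heq' : L i1 ⊓ L j = L i2 ⊓ L j := heq
      have hQle2 : Q ≤ L i2 := by rw [hQ, heq']; exact inf_le_left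
      have hle2 : P ⊔ Q ≤ L i2 := sup_le hi2 hQle2
      have he1 : P ⊔ Q = L i1 :=
        Submodule.eq_of_le_of_finrank_le hle1 (by rw [hL2 i1]; exact hPQ2)
      have he2 : P ⊔ Q = L i2 :=
        Submodule.eq_of_le_of_finrank_le hle2 (by rw [hL2 i2]; exact hPQ2)
      exact hinj (he1 ▸ he2)
  -- the point sets
  set pts : Finset (Submodule F M) :=
    Finset.univ.filter (fun P : Submodule F M => finrank F P = 1) with hpts
  set onl : Fin ℓ → Finset (Submodule F M) :=
    fun i => Finset.univ.filter (fun P : Submodule F M => finrank F P = 1 ∧ P ≤ L i)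
    with honl
  set shr : Fin ℓ → Finset (Submodule F M) :=
    fun i => Finset.univ.filter (fun P : Submodule F M => finrank F P = 1 ∧ P ≤ L i ∧
      ∃ j, j ≠ i ∧ P ≤ L j) with hshr
  set prv : Fin ℓ → Finset (Submodule F M) := fun i => onl i \ shr i with hprv
  set D : Finset (Submodule F M) :=
    Finset.univ.filter (fun P : Submodule F M => finrank F P = 1 ∧
      ∃ i j, i ≠ j ∧ P ≤ L i ∧ P ≤ L j) with hD
  have hq1pos : 1 ≤ q - 1 := by omega
  -- cardinality of the whole point set
  have hptscard : pts.card = q ^ 2 + q + 1 := by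
    have h := aux_rank1_count (F := F) (V := M)
    have hcM : Fintype.card M = q ^ 3 := by
      rw [card_eq_pow_finrank (K := F) (V := M), hq, hrk3]
    rw [hcM, hq] at h
    have : (q ^ 2 + q + 1) * (q - 1) = q ^ 3 - 1 := by
      obtain ⟨r, rfl⟩ : ∃ r, q = r + 1 := ⟨q - 1, by omega⟩
      have hcube : (r + 1) ^ 3 = ((r + 1) ^ 2 + (r + 1) + 1) * r + 1 := by ring
      simp only [Nat.add_sub_cancel]
      omega
    rw [← this] at h
    exact Nat.eq_of_mul_eq_mul_right (by omega) h
  -- cardinality of a line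
  have honlcard : ∀ i, (onl i).card = q + 1 := by
    intro i
    have h := aux_rank1_count_le (F := F) (V := M) (L i)
    have hcL : Fintype.card (L i) = q ^ 2 := by
      rw [card_eq_pow_finrank (K := F) (V := L i), hq, hL2 i]
    rw [hcL, hq] at h
    have : (q + 1) * (q - 1) = q ^ 2 - 1 := by
      obtain ⟨r, rfl⟩ : ∃ r, q = r + 1 := ⟨q - 1, by omega⟩
      have hsq : (r + 1) ^ 2 = (r + 1 + 1) * r + 1 := by ring
      simp only [Nat.add_sub_cancel]
      omega
    rw [← this] at h
    exact Nat.eq_of_mul_eq_mul_right (by omega) h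
  -- shared points
  have hshrle : ∀ i, (shr i).card ≤ q - δ := by
    intro i
    have h := hint i
    rwa [Set.ncard_eq_toFinset_card', Set.toFinset_setOf] at h
  have hshrsub : ∀ i, shr i ⊆ onl i := by
    intro i P hP
    simp only [hshr, honl, mem_filter, mem_univ, true_and] at hP ⊢
    exact ⟨hP.1, hP.2.1⟩
  have hprvcard : ∀ i, (prv i).card = q + 1 - (shr i).card := by
    intro i
    rw [hprv]
    rw [Finset.card_sdiff_of_subset (hshrsub i), honlcard i]
  -- shr i is the set of points of D on line i
  have hshrD : ∀ i, shr i = D.filter (fun P => P ≤ L i) := by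
    intro i
    ext P
    simp only [hshr, hD, mem_filter, mem_univ, true_and]
    constructor
    · rintro ⟨h1, h2, j, hji, h3⟩
      exact ⟨⟨h1, j, i, hji, h3, h2⟩, h2⟩
    · rintro ⟨⟨h1, i', j', hij', h2, h3⟩, h4⟩
      refine ⟨h1, h4, ?_⟩
      by_cases hii : i' = i
      · exact ⟨j', fun h => hij' (hii.symm ▸ h ▸ rfl), h3⟩
      · exact ⟨i', hii, h2⟩
  -- double counting of incidences with D
  have hdouble : ∑ i : Fin ℓ, (shr i).card ≤ D.card * (q - δ) := by
    have hswap : ∑ i : Fin ℓ, (shr i).card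
        = ∑ P ∈ D, (Finset.univ.filter (fun i : Fin ℓ => P ≤ L i)).card := by
      simp only [hshrD, Finset.card_filter]
      rw [Finset.sum_comm]
      refine Finset.sum_congr rfl (fun x _ => ?_)
      convert Finset.card_filter (fun P => P ≤ L x) D
    rw [hswap]
    calc ∑ P ∈ D, (Finset.univ.filter (fun i : Fin ℓ => P ≤ L i)).card
        ≤ ∑ _P ∈ D, (q - δ) := by
          apply Finset.sum_le_sum
          intro P hP
          simp only [hD, mem_filter, mem_univ, true_and] at hP
          exact hdeg P hP.1
      _ = D.card * (q - δ) := by rw [Finset.sum_const, smul_eq_mul]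
  -- the private points together with D fit inside pts, disjointly
  have hmain : (∑ i : Fin ℓ, (prv i).card) + D.card ≤ q ^ 2 + q + 1 := by
    rw [← hptscard]
    have hUsub : (Finset.univ.biUnion prv) ∪ D ⊆ pts := by
      intro P hP
      simp only [Finset.mem_union, Finset.mem_biUnion] at hP
      simp only [hpts, mem_filter, mem_univ, true_and]
      rcases hP with ⟨i, _, hPi⟩ | hPD
      · have := Finset.mem_sdiff.mp hPi
        have := this.1
        simp only [honl, mem_filter, mem_univ, true_and] at this
        exact this.1
      · simp only [hD, mem_filter, mem_univ, true_and] at hPD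
        exact hPD.1
    have hdisjprv : ∀ i ∈ (Finset.univ : Finset (Fin ℓ)), ∀ j ∈ Finset.univ,
        i ≠ j → Disjoint (prv i) (prv j) := by
      intro i _ j _ hij
      rw [Finset.disjoint_left]
      intro P hPi hPj
      rw [hprv, Finset.mem_sdiff] at hPi hPj
      have h1 := hPi.1
      have h2 := hPj.1
      simp only [honl, mem_filter, mem_univ, true_and] at h1 h2
      apply hPi.2
      simp only [hshr, mem_filter, mem_univ, true_and]
      exact ⟨h1.1, h1.2, j, hij.symm, h2.2⟩
    have hdisjD : Disjoint (Finset.univ.biUnion prv) D := by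
      rw [Finset.disjoint_left]
      intro P hP hPD
      simp only [Finset.mem_biUnion] at hP
      obtain ⟨i, _, hPi⟩ := hP
      rw [hprv, Finset.mem_sdiff] at hPi
      simp only [hD, mem_filter, mem_univ, true_and] at hPD
      obtain ⟨h1, i', j', hij', h2, h3⟩ := hPD
      have honli := hPi.1
      simp only [honl, mem_filter, mem_univ, true_and] at honli
      apply hPi.2
      simp only [hshr, mem_filter, mem_univ, true_and]
      refine ⟨honli.1, honli.2, ?_⟩
      by_cases hii : i' = i
      · exact ⟨j', fun h => hij' (hii.symm ▸ h ▸ rfl), h3⟩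
      · exact ⟨i', hii, h2⟩
    calc (∑ i : Fin ℓ, (prv i).card) + D.card
        = (Finset.univ.biUnion prv).card + D.card := by
          rw [Finset.card_biUnion hdisjprv]
      _ = ((Finset.univ.biUnion prv) ∪ D).card :=
          (Finset.card_union_of_disjoint hdisjD).symm
      _ ≤ pts.card := Finset.card_le_card hUsub
  -- per-line arithmetic
  have hper : ∀ i : Fin ℓ, (δ + 2) * (q - δ) ≤ (prv i).card * (q - δ) + (shr i).card := by
    intro i
    have hs := hshrle i
    have hp := hprvcard i
    set s := (shr i).card
    have hm : 1 ≤ q - δ := by omega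
    obtain ⟨t, ht⟩ := Nat.exists_eq_add_of_le hs
    have hpt : (prv i).card = δ + 1 + t := by omega
    rw [hpt, ht]
    have htm : t ≤ t * (s + t) := Nat.le_mul_of_pos_right t (by omega)
    nlinarith
  -- combine everything
  have hfinal : ℓ * (δ + 2) * (q - δ) ≤ (q ^ 2 + q + 1) * (q - δ) := by
    calc ℓ * (δ + 2) * (q - δ)
        = ∑ _i : Fin ℓ, (δ + 2) * (q - δ) := by
          rw [Finset.sum_const, Finset.card_univ, Fintype.card_fin, smul_eq_mul, mul_assoc]
      _ ≤ ∑ i : Fin ℓ, ((prv i).card * (q - δ) + (shr i).card) :=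
          Finset.sum_le_sum (fun i _ => hper i)
      _ = (∑ i : Fin ℓ, (prv i).card) * (q - δ) + ∑ i : Fin ℓ, (shr i).card := by
          rw [Finset.sum_add_distrib, Finset.sum_mul]
      _ ≤ (∑ i : Fin ℓ, (prv i).card) * (q - δ) + D.card * (q - δ) := by
          exact Nat.add_le_add_left hdouble _
      _ = ((∑ i : Fin ℓ, (prv i).card) + D.card) * (q - δ) := by ring
      _ ≤ (q ^ 2 + q + 1) * (q - δ) := Nat.mul_le_mul_right _ hmain
  have hcancel : ℓ * (δ + 2) ≤ q ^ 2 + q + 1 :=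
    Nat.le_of_mul_le_mul_right hfinal (by omega)
  rw [Nat.le_div_iff_mul_le (by omega)]
  exact hcancel
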